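/- Let n ≥ 1, let ε ∈ (0, 1), and set R = (1+ε)/(1−ε). Let C ⊆ ℝⁿ (Euclidean space) be a compact convex set with nonempty interior such that dist(x, ∂C) < R for all x ∈ C, where ∂C is the topological boundary of C. Assume that for each b ∈ ∂C there exist r > 0 and a function F_b : B_r(b) ∩ C → ℝ which is (1+ε)-Lipschitz and (−1+ε)-concave on B_r(b) ∩ C, with F_b(q) = −1/2 for every q ∈ B_r(b) ∩ ∂C and F_b(q) > −1/2 for every q ∈ B_r(b) ∩ int(C). Let u ∈ ℝⁿ be a unit vector, let γ(t) = γ(0) + t·u be a unit-speed segment with γ(0) ∈ int(C), let p ∈ ∂C be a point of ∂C nearest to γ(0), set d₀ = dist(γ(0), ∂C), and let α be the angle between u and p − γ(0). Then, as t → 0⁺, dist(γ(t), ∂C) ≤ R − √( (R − d₀)² + t² + 2·(R − d₀)·t·cos α ) + o(t²); that is, limsup_{t → 0⁺} [ dist(γ(t), ∂C) − ( R − √( (R − d₀)² + t² + 2(R − d₀)·t·cos α ) ) ] / t² ≤ 0. -/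

import Mathlib

/-- A unit-speed geodesic (on `[a,b]`) in a metric space. -/
def IsUnitSpeedGeodesic {X : Type*} [MetricSpace X] (γ : ℝ → X) (a b : ℝ) : Prop :=
  ∀ s ∈ Set.Icc a b, ∀ t ∈ Set.Icc a b, dist (γ s) (γ t) = |s - t|

/-- `f` is `λ`-concave on `Ω`: along every unit-speed geodesic with image in `Ω`,
`t ↦ f (γ t) - (λ/2) t²` is concave. In Euclidean space unit-speed geodesics are
exactly unit-speed parametrized line segments. -/
def LambdaConcaveOn {X : Type*} [MetricSpace X] (lam : ℝ) (f : X → ℝ) (Ω : Set X) : Prop :=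
  ∀ (γ : ℝ → X) (a b : ℝ), a ≤ b → IsUnitSpeedGeodesic γ a b →
    (∀ t ∈ Set.Icc a b, γ t ∈ Ω) →
    ConcaveOn ℝ (Set.Icc a b) (fun t => f (γ t) - lam / 2 * t ^ 2)

open Metric Set Filter

local notation "⟪" x ", " y "⟫" => @inner ℝ _ _ x y

variable {E : Type*} [NormedAddCommGroup E] [InnerProductSpace ℝ E]

lemma avoid_frontier_subset_interior
    (C : Set E) (S : Set E) (hS : IsPreconnected S)
    (hdisj : ∀ z ∈ S, z ∉ frontier C) (x : E) (hx : x ∈ S) (hxi : x ∈ interior C) :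
    S ⊆ interior C := by
  refine hS.subset_left_of_subset_union isOpen_interior (isClosed_closure (s := C)).isOpen_compl
    ?_ ?_ ⟨x, hx, hxi⟩
  · exact disjoint_compl_right.mono_left (interior_subset.trans subset_closure)
  · intro z hz
    by_cases hzc : z ∈ closure C
    · exact Or.inl (by
        rcases (em (z ∈ interior C)) with h | h
        · exact h
        · exact absurd ⟨hzc, h⟩ (hdisj z hz))
    · exact Or.inr hzc

/-- The ball of radius `infDist x (frontier C)` around an interior point is in the interior. -/
lemma ball_infDist_subset_interior (C : Set E) (x : E) (hx : x ∈ interior C) :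
    Metric.ball x (Metric.infDist x (frontier C)) ⊆ interior C := by
  rcases le_or_gt (Metric.infDist x (frontier C)) 0 with h | h
  · rw [Metric.ball_eq_empty.mpr h]; exact empty_subset _
  refine avoid_frontier_subset_interior C _ (convex_ball x _).isPreconnected ?_ x
    (Metric.mem_ball_self h) hx
  intro z hz hzf
  have h1 : Metric.infDist x (frontier C) ≤ dist x z := Metric.infDist_le_dist_of_mem hzf
  rw [Metric.mem_ball, dist_comm] at hz
  exact absurd h1 (not_le.mpr hz)

/-- Supporting halfspace at the nearest boundary point. -/
lemma halfspace (C : Set E) (hconv : Convex ℝ C) (hC : IsClosed C)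
    (γ₀ : E) (hγ₀ : γ₀ ∈ interior C) (p : E) (hp : p ∈ frontier C)
    (d₀ : ℝ) (hd₀pos : 0 < d₀) (hd₀ : d₀ = Metric.infDist γ₀ (frontier C))
    (hnear : dist γ₀ p = d₀)
    (ν : E) (hν : ν = d₀⁻¹ • (p - γ₀)) :
    ∀ x ∈ C, ⟪x - p, ν⟫ ≤ 0 := by
  have hpγ : p - γ₀ = d₀ • ν := by rw [hν, smul_smul, mul_inv_cancel₀ hd₀pos.ne', one_smul]
  have hνn : ‖ν‖ = 1 := by
    rw [hν, norm_smul, norm_inv, Real.norm_of_nonneg hd₀pos.le, ← dist_eq_norm',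
      hnear, inv_mul_cancel₀ hd₀pos.ne']
  have hball : Metric.ball γ₀ d₀ ⊆ C := by
    refine (ball_infDist_subset_interior C γ₀ hγ₀ |>.trans interior_subset).trans_eq' ?_
    rw [hd₀]
  intro x hx
  by_contra hc
  push_neg at hc
  set c : ℝ := ⟪x - p, ν⟫ with hcdef
  have hcpos : 0 < c := hc
  have hinner : ⟪x - γ₀, ν⟫ = c + d₀ := by
    have : x - γ₀ = (x - p) + (p - γ₀) := by abel
    rw [this, inner_add_left, hpγ, real_inner_smul_left, real_inner_self_eq_norm_sq, hνn]
    ring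
  -- choose θ
  set D : ℝ := ‖x - γ₀‖ ^ 2 + d₀ ^ 2 + 1 with hDdef
  have hDpos : 0 < D := by positivity
  set θ : ℝ := d₀ * c / D with hθdef
  have hθpos : 0 < θ := by positivity
  have hθlt : θ < 1 := by
    have hcs : c + d₀ ≤ ‖x - γ₀‖ := by
      calc c + d₀ = ⟪x - γ₀, ν⟫ := hinner.symm
        _ ≤ ‖x - γ₀‖ * ‖ν‖ := real_inner_le_norm _ _
        _ = ‖x - γ₀‖ := by rw [hνn, mul_one]
    have h1 : d₀ * c ≤ d₀ * ‖x - γ₀‖ := by nlinarith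
    have h2 : d₀ * ‖x - γ₀‖ < D := by nlinarith [sq_nonneg (d₀ - ‖x - γ₀‖)]
    rw [hθdef, div_lt_one hDpos]; linarith
  set m : E := γ₀ + θ • (x - γ₀) with hmdef
  have hkey : ‖p - m‖ ^ 2 < ((1 - θ) * d₀) ^ 2 := by
    have : p - m = (p - γ₀) - θ • (x - γ₀) := by rw [hmdef]; abel
    rw [this, norm_sub_sq_real, norm_smul, real_inner_smul_right, ← dist_eq_norm', hnear]
    have h1 : ⟪p - γ₀, x - γ₀⟫ = d₀ * (c + d₀) := by
      rw [hpγ, real_inner_smul_left, real_inner_comm, hinner]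
    have h2 : ‖θ • (x - γ₀)‖ ^ 2 = θ ^ 2 * ‖x - γ₀‖ ^ 2 := by
      rw [norm_smul, Real.norm_of_nonneg hθpos.le]; ring
    rw [norm_smul] at *
    have h3 : θ * (‖x - γ₀‖ ^ 2 - d₀ ^ 2) < 2 * d₀ * c := by
      have : θ * D = d₀ * c := by rw [hθdef]; field_simp
      nlinarith
    have habs : ‖(θ : ℝ)‖ = θ := Real.norm_of_nonneg hθpos.le
    rw [habs]
    nlinarith
  have hpm : ‖p - m‖ < (1 - θ) * d₀ := by
    have h1 : 0 ≤ (1 - θ) * d₀ := by nlinarith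
    nlinarith [norm_nonneg (p - m), sq_nonneg (‖p - m‖ - (1 - θ) * d₀)]
  -- now p ∈ interior C
  have hpint : p ∈ interior C := by
    rw [mem_interior]
    refine ⟨Metric.ball p ((1 - θ) * d₀ - ‖p - m‖), ?_, Metric.isOpen_ball,
      Metric.mem_ball_self (by linarith)⟩
    intro z hz
    have h1θ : (0 : ℝ) < 1 - θ := by linarith
    set b : E := (1 - θ)⁻¹ • (z - θ • x) with hbdef
    have hb : ‖b - γ₀‖ < d₀ := by
      have hzb : b - γ₀ = (1 - θ)⁻¹ • (z - m) := by
        rw [hbdef, hmdef]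
        match_scalars <;> field_simp <;> ring
      rw [hzb, norm_smul, norm_inv, Real.norm_of_nonneg h1θ.le]
      rw [Metric.mem_ball, dist_eq_norm] at hz
      have : ‖z - m‖ ≤ ‖z - p‖ + ‖p - m‖ := norm_sub_le_norm_sub_add_norm_sub z p m
      have h4 : ‖z - m‖ < (1 - θ) * d₀ := by linarith
      rw [inv_mul_lt_iff₀ h1θ]
      linarith [h4]
    have hbC : b ∈ C := hball (by rwa [Metric.mem_ball, dist_eq_norm])
    have hz' : z = (1 - θ) • b + θ • x := by
      rw [hbdef]
      match_scalars <;> field_simp <;> ring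
    rw [hz']
    exact hconv hbC hx (by linarith) hθpos.le (by ring)
  rw [IsClosed.frontier_eq hC] at hp
  exact hp.2 hpint

/-- Depth bound: distance to frontier is at most the distance to the supporting hyperplane. -/
lemma depth_bound (C : Set E) (p : E) (ν : E)
    (hhalf : ∀ x ∈ C, ⟪x - p, ν⟫ ≤ 0) (hνn : ‖ν‖ = 1)
    (x : E) (hx : x ∈ C) :
    Metric.infDist x (frontier C) ≤ ⟪p - x, ν⟫ := by
  by_cases hxi : x ∈ interior C
  · set D := Metric.infDist x (frontier C) with hD
    by_contra hcon
    push_neg at hcon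
    have hc0 : 0 ≤ ⟪p - x, ν⟫ := by
      have := hhalf x hx
      have : ⟪x - p, ν⟫ = -⟪p - x, ν⟫ := by
        rw [← inner_neg_left]; congr 1; abel
      linarith [hhalf x hx, this ▸ hhalf x hx]
    set ρ : ℝ := (⟪p - x, ν⟫ + D) / 2 with hρ
    have hρ1 : ⟪p - x, ν⟫ < ρ := by rw [hρ]; linarith
    have hρ2 : ρ < D := by rw [hρ]; linarith
    have hρ0 : 0 ≤ ρ := by linarith
    have hmem : x + ρ • ν ∈ Metric.ball x D := by
      rw [Metric.mem_ball, dist_eq_norm]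
      simp only [add_sub_cancel_left, norm_smul, Real.norm_of_nonneg hρ0, hνn, mul_one]
      exact hρ2
    have hC : x + ρ • ν ∈ C := interior_subset (ball_infDist_subset_interior C x hxi hmem)
    have := hhalf _ hC
    rw [show x + ρ • ν - p = ρ • ν - (p - x) by abel, inner_sub_left, real_inner_smul_left,
      real_inner_self_eq_norm_sq, hνn] at this
    nlinarith
  · have h0 : Metric.infDist x (frontier C) = 0 := by
      have hxf : x ∈ frontier C := by
        rw [frontier, mem_diff]
        exact ⟨subset_closure hx, hxi⟩
      exact Metric.infDist_zero_of_mem hxf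
    rw [h0]
    have h := hhalf x hx
    have h2 : ⟪x - p, ν⟫ = -⟪p - x, ν⟫ := by
      rw [← inner_neg_left]; congr 1; abel
    linarith [h2 ▸ h]

set_option maxHeartbeats 800000 in
/-- Key chord lemma: nearby frontier points lie in the comparison ball of radius R. -/
lemma chord_key (C : Set E) (hconv : Convex ℝ C) (hCcl : IsClosed C)
    (hfr_cpt : IsCompact (frontier C))
    (ε : ℝ) (hε : 0 < ε) (hε1 : ε < 1) (R : ℝ) (hR : R = (1 + ε) / (1 - ε))
    (p : E) (hp : p ∈ frontier C) (ν : E) (hνn : ‖ν‖ = 1)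
    (hhalf : ∀ x ∈ C, ⟪x - p, ν⟫ ≤ 0)
    (r : ℝ) (hr : 0 < r) (F : E → ℝ)
    (hFlip : ∀ x ∈ Metric.ball p r ∩ C, ∀ y ∈ Metric.ball p r ∩ C,
      |F x - F y| ≤ (1 + ε) * dist x y)
    (hFconc : LambdaConcaveOn (-1 + ε) F (Metric.ball p r ∩ C))
    (hFfr : ∀ q ∈ Metric.ball p r ∩ frontier C, F q = -(1 / 2))
    (q : E) (hq : q ∈ frontier C) (hqr : dist q p < r / 3) :
    ‖q - (p - R • ν)‖ ≤ R := by
  have hpC : p ∈ C := hCcl.frontier_subset hp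
  have hqC : q ∈ C := hCcl.frontier_subset hq
  have hRpos : 0 < R := by rw [hR]; apply div_pos <;> linarith
  rcases eq_or_ne q p with rfl | hqp
  · rw [show q - (q - R • ν) = R • ν by abel, norm_smul, hνn,
      Real.norm_of_nonneg hRpos.le, mul_one]
  set L : ℝ := ‖q - p‖ with hL
  have hL0 : 0 < L := by
    rw [hL, norm_pos_iff]; exact sub_ne_zero_of_ne hqp
  have hLr : L < r / 3 := by rw [hL, ← dist_eq_norm]; exact hqr
  -- Lipschitz bound via nearest frontier point
  have hfr_ne : (frontier C).Nonempty := ⟨p, hp⟩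
  have hFd : ∀ x ∈ C, dist x p < r / 3 → F x ≤ -(1/2) + (1 + ε) * Metric.infDist x (frontier C) := by
    intro x hx hxp
    obtain ⟨y, hy, hyd⟩ := hfr_cpt.exists_infDist_eq_dist hfr_ne x
    have hxy : dist x y < r / 3 := by
      rw [← hyd]
      exact lt_of_le_of_lt (Metric.infDist_le_dist_of_mem hp) hxp
    have hyp : dist y p < r := by
      calc dist y p ≤ dist y x + dist x p := dist_triangle y x p
        _ < r / 3 + r / 3 := by rw [dist_comm]; exact add_lt_add hxy hxp
        _ < r := by linarith
    have hFy : F y = -(1/2) := hFfr y ⟨hyp, hy⟩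
    have := hFlip x ⟨by rw [Metric.mem_ball]; linarith, hx⟩ y ⟨hyp, hCcl.frontier_subset hy⟩
    have h2 : F x - F y ≤ (1 + ε) * dist x y := le_trans (le_abs_self _) this
    rw [hFy, ← hyd] at h2
    linarith
  -- the chord
  set σ : ℝ → E := fun s => p + (s / L) • (q - p) with hσ
  have hσnorm : ∀ s : ℝ, 0 ≤ s → ‖σ s - p‖ = s := by
    intro s hs
    simp only [hσ, add_sub_cancel_left, norm_smul, ← hL]
    rw [Real.norm_of_nonneg (div_nonneg hs hL0.le), div_mul_cancel₀ _ hL0.ne']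
  have hgeo : IsUnitSpeedGeodesic σ 0 L := by
    intro s hs t ht
    simp only [hσ, dist_eq_norm]
    have : p + (s / L) • (q - p) - (p + (t / L) • (q - p)) = ((s - t) / L) • (q - p) := by
      rw [sub_div, sub_smul]; abel
    rw [this, norm_smul, ← hL, Real.norm_eq_abs, abs_div, abs_of_pos hL0,
      div_mul_cancel₀ _ hL0.ne']
  have hmem : ∀ s ∈ Set.Icc (0:ℝ) L, σ s ∈ Metric.ball p r ∩ C := by
    intro s hs
    constructor
    · rw [Metric.mem_ball, dist_eq_norm, hσnorm s hs.1]
      linarith [hs.2]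
    · have heq : σ s = (1 - s / L) • p + (s / L) • q := by
        simp only [hσ]; match_scalars <;> field_simp <;> ring_nf
      rw [heq]
      have h1 : s / L ≤ 1 := by rw [div_le_one hL0]; exact hs.2
      exact hconv hpC hqC (by linarith) (div_nonneg hs.1 hL0.le) (by ring)
  have hcc := hFconc σ 0 L hL0.le hgeo hmem
  have hσ0 : σ 0 = p := by simp [hσ]
  have hσL : σ L = q := by
    simp only [hσ, div_self hL0.ne', one_smul]; abel
  have hFp : F p = -(1/2) := hFfr p ⟨Metric.mem_ball_self hr, hp⟩
  have hFq : F q = -(1/2) := hFfr q ⟨by rw [Metric.mem_ball]; linarith, hq⟩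
  set H : ℝ := ⟪q - p, ν⟫ with hH
  -- pointwise inequality on (0, L)
  have h0mem : (0:ℝ) ∈ Set.Icc (0:ℝ) L := Set.mem_Icc.mpr ⟨le_refl 0, hL0.le⟩
  have hLmem : L ∈ Set.Icc (0:ℝ) L := Set.mem_Icc.mpr ⟨hL0.le, le_refl L⟩
  have hptwise : ∀ s ∈ Set.Ioo (0:ℝ) L, (1 - ε) * (L - s) / 2 ≤ (1 + ε) * (-H) / L := by
    intro s hs
    have hsL : s / L ≤ 1 := by rw [div_le_one hL0]; exact hs.2.le
    have hconc := hcc.2 h0mem hLmem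
      (div_nonneg (by linarith [hs.2.le] : (0:ℝ) ≤ L - s) hL0.le)
      (div_nonneg hs.1.le hL0.le)
      (by field_simp; ring : (L - s) / L + s / L = 1)
    have harg : (L - s) / L * 0 + s / L * L = s := by
      rw [mul_zero, zero_add]
      exact div_mul_cancel₀ _ hL0.ne'
    simp only [smul_eq_mul] at hconc
    rw [harg, hσ0, hσL, hFp, hFq] at hconc
    have e1 : ((L - s) / L) * (-(1/2) - (-1+ε)/2 * 0^2) + (s / L) * (-(1/2) - (-1+ε)/2 * L^2)
        = -(1/2) - (-1+ε)/2 * (s * L) := by field_simp; ring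
    have hlow : -(1/2) + (1 - ε) * s * (L - s) / 2 ≤ F (σ s) := by
      nlinarith [hconc, e1]
    have hup : F (σ s) ≤ -(1/2) + (1 + ε) * ((s / L) * (-H)) := by
      have h1 := hFd (σ s) (hmem s ⟨hs.1.le, hs.2.le⟩).2
        (by rw [dist_eq_norm, hσnorm s hs.1.le]; linarith [hs.2])
      have h2 : Metric.infDist (σ s) (frontier C) ≤ (s / L) * (-H) := by
        have h3 := depth_bound C p ν hhalf hνn (σ s) (hmem s ⟨hs.1.le, hs.2.le⟩).2
        have h4 : ⟪p - σ s, ν⟫ = (s / L) * (-H) := by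
          rw [show p - σ s = -((s / L) • (q - p)) by simp only [hσ]; abel, inner_neg_left,
            real_inner_smul_left, hH]
          ring
        rw [h4] at h3
        exact h3
      nlinarith [h1, h2, hε]
    have hcomb : (1 - ε) * s * (L - s) / 2 ≤ (1 + ε) * ((s / L) * (-H)) := by linarith
    have hfinal : s * ((1 - ε) * (L - s) / 2) ≤ s * ((1 + ε) * (-H) / L) := by
      calc s * ((1 - ε) * (L - s) / 2) = (1 - ε) * s * (L - s) / 2 := by ring
        _ ≤ (1 + ε) * ((s / L) * (-H)) := hcomb
        _ = s * ((1 + ε) * (-H) / L) := by field_simp [hL0.ne']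
    exact le_of_mul_le_mul_left hfinal hs.1
  -- limit s → 0⁺
  have hlim : (1 - ε) * L / 2 ≤ (1 + ε) * (-H) / L := by
    have htend : Filter.Tendsto (fun s : ℝ => (1 - ε) * (L - s) / 2) (nhdsWithin 0 (Set.Ioi 0))
        (nhds ((1 - ε) * L / 2)) := by
      have hcont : Continuous (fun s : ℝ => (1 - ε) * (L - s) / 2) := by fun_prop
      have h0 := hcont.tendsto 0
      simp only [sub_zero] at h0
      exact h0.mono_left nhdsWithin_le_nhds
    refine le_of_tendsto htend ?_
    filter_upwards [Ioo_mem_nhdsGT_of_mem (Set.mem_Ico.mpr ⟨le_refl 0, hL0⟩)] with s hs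
    exact hptwise s hs
  -- conclude
  have h1ε : (0:ℝ) < 1 - ε := by linarith
  have hRe : R * (1 - ε) = 1 + ε := by rw [hR]; field_simp
  have hHneg : L ^ 2 + 2 * R * H ≤ 0 := by
    have h1 : (1 - ε) * L / 2 * L ≤ (1 + ε) * (-H) := by
      have h2 := mul_le_mul_of_nonneg_right hlim hL0.le
      rw [div_mul_cancel₀ _ hL0.ne'] at h2
      exact h2
    have h4 : (1 + ε) * (-H) = (1 - ε) * (R * (-H)) := by rw [← hRe]; ring
    rw [h4] at h1
    have h6 : (1 - ε) * (L * L / 2) ≤ (1 - ε) * (R * (-H)) := by linarith [h1]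
    have h5 : L * L / 2 ≤ R * (-H) := le_of_mul_le_mul_left h6 h1ε
    nlinarith [h5]
  have hnormsq : ‖q - (p - R • ν)‖ ^ 2 ≤ R ^ 2 := by
    have heq : q - (p - R • ν) = (q - p) + R • ν := by abel
    rw [heq, norm_add_sq_real, real_inner_smul_right, norm_smul,
      Real.norm_of_nonneg hRpos.le, hνn, ← hL, ← hH]
    nlinarith [hHneg]
  calc ‖q - (p - R • ν)‖ = Real.sqrt (‖q - (p - R • ν)‖ ^ 2) := by
        rw [Real.sqrt_sq (norm_nonneg _)]
    _ ≤ Real.sqrt (R ^ 2) := Real.sqrt_le_sqrt hnormsq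
    _ = R := Real.sqrt_sq hRpos.le

/-- Local containment of `C` in the comparison ball. -/
lemma local_containment (C : Set E) (hCcl : IsClosed C)
    (p : E) (hp : p ∈ frontier C) (ν : E) (hνn : ‖ν‖ = 1)
    (hhalf : ∀ x ∈ C, ⟪x - p, ν⟫ ≤ 0)
    (R : ℝ) (hRpos : 0 < R)
    (ρ : ℝ) (hρpos : 0 < ρ) (hρR : ρ ≤ R)
    (hfr : ∀ q ∈ frontier C, dist q p < ρ → ‖q - (p - R • ν)‖ ≤ R)
    (x : E) (hx : x ∈ C) (hxp : dist x p < ρ / 4) :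
    ‖x - (p - R • ν)‖ ≤ R := by
  set M : E := p - R • ν with hM
  set S : Set ℝ := {s | 0 ≤ s ∧ x + s • ν ∈ C} with hS
  have hSne : S.Nonempty := ⟨0, le_refl 0, by simpa using hx⟩
  have hSbdd : BddAbove S := by
    refine ⟨‖p - x‖, fun s hs => ?_⟩
    have h1 := hhalf _ hs.2
    rw [show x + s • ν - p = s • ν - (p - x) by abel, inner_sub_left,
      real_inner_smul_left, real_inner_self_eq_norm_sq, hνn] at h1
    have h2 : ⟪p - x, ν⟫ ≤ ‖p - x‖ := by
      calc ⟪p - x, ν⟫ ≤ ‖p - x‖ * ‖ν‖ := real_inner_le_norm _ _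
        _ = ‖p - x‖ := by rw [hνn, mul_one]
    nlinarith [h1, h2]
  have hScl : IsClosed S := by
    have : S = {s : ℝ | 0 ≤ s} ∩ (fun s : ℝ => x + s • ν) ⁻¹' C := rfl
    rw [this]
    exact isClosed_Ici.inter (hCcl.preimage (by fun_prop))
  set s₁ : ℝ := sSup S with hs₁
  have hs₁S : s₁ ∈ S := hScl.csSup_mem hSne hSbdd
  set y : E := x + s₁ • ν with hy
  have hyC : y ∈ C := hs₁S.2
  have hs₁0 : 0 ≤ s₁ := hs₁S.1
  have hs₁le : s₁ ≤ ‖p - x‖ := by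
    have h1 := hhalf _ hyC
    rw [show y - p = s₁ • ν - (p - x) by rw [hy]; abel, inner_sub_left,
      real_inner_smul_left, real_inner_self_eq_norm_sq, hνn] at h1
    have h2 : ⟪p - x, ν⟫ ≤ ‖p - x‖ := by
      calc ⟪p - x, ν⟫ ≤ ‖p - x‖ * ‖ν‖ := real_inner_le_norm _ _
        _ = ‖p - x‖ := by rw [hνn, mul_one]
    nlinarith [h1, h2]
  have hyfr : y ∈ frontier C := by
    rw [hCcl.frontier_eq, mem_diff]
    refine ⟨hyC, fun hyint => ?_⟩
    obtain ⟨δ, hδ, hball⟩ := Metric.isOpen_iff.mp isOpen_interior y hyint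
    have : y + (δ/2) • ν ∈ C := by
      refine interior_subset (hball ?_)
      rw [Metric.mem_ball, dist_eq_norm]
      simp only [add_sub_cancel_left, norm_smul, hνn, mul_one]
      rw [Real.norm_of_nonneg (by linarith)]
      linarith
    have hmem : s₁ + δ/2 ∈ S := by
      constructor
      · linarith
      · rw [show x + (s₁ + δ/2) • ν = y + (δ/2) • ν by rw [hy]; module]
        exact this
    have := le_csSup hSbdd hmem
    linarith
  have hxpn : ‖x - p‖ < ρ / 4 := by rw [← dist_eq_norm]; exact hxp
  have hs₁lt : s₁ < ρ / 4 := by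
    rw [norm_sub_rev] at hs₁le
    exact lt_of_le_of_lt hs₁le hxpn
  have hypn : ‖y - p‖ < ρ / 2 := by
    rw [hy, show x + s₁ • ν - p = (x - p) + s₁ • ν by abel]
    calc ‖(x - p) + s₁ • ν‖ ≤ ‖x - p‖ + ‖s₁ • ν‖ := norm_add_le _ _
      _ = ‖x - p‖ + s₁ := by rw [norm_smul, hνn, mul_one, Real.norm_of_nonneg hs₁0]
      _ < ρ / 4 + ρ / 4 := add_lt_add hxpn hs₁lt
      _ = ρ / 2 := by ring
  have hyM : ‖y - M‖ ≤ R := hfr y hyfr (by rw [dist_eq_norm]; linarith)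
  have hinner : R / 2 ≤ ⟪y - M, ν⟫ := by
    have h1 : y - M = (y - p) + R • ν := by rw [hM]; abel
    rw [h1, inner_add_left, real_inner_smul_left, real_inner_self_eq_norm_sq, hνn]
    have h2 : -‖y - p‖ ≤ ⟪y - p, ν⟫ := by
      have := real_inner_le_norm (y - p) ν
      have h3 := real_inner_le_norm (p - y) ν
      rw [show p - y = -(y - p) by abel, inner_neg_left, norm_neg] at h3
      rw [hνn, mul_one] at h3
      linarith
    have hρ2 : ρ / 2 ≤ R / 2 := by linarith
    nlinarith [h2, hypn]
  have hxM : ‖x - M‖ ^ 2 ≤ R ^ 2 := by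
    have h1 : x - M = (y - M) - s₁ • ν := by rw [hy, hM]; abel
    rw [h1, norm_sub_sq_real, real_inner_smul_right, norm_smul,
      Real.norm_of_nonneg hs₁0, hνn, mul_one]
    have hs₁R : s₁ ≤ R := by linarith
    nlinarith [hyM, hinner, hs₁0, norm_nonneg (y - M)]
  calc ‖x - (p - R • ν)‖ = Real.sqrt (‖x - M‖ ^ 2) := by rw [Real.sqrt_sq (norm_nonneg _), hM]
    _ ≤ Real.sqrt (R ^ 2) := Real.sqrt_le_sqrt hxM
    _ = R := Real.sqrt_sq hRpos.le

lemma norm_expand_aux (ν u : E) (hν : ‖ν‖ = 1) (hu : ‖u‖ = 1) (c t : ℝ) :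
    ‖c • ν + t • u‖ ^ 2 = c ^ 2 + t ^ 2 + 2 * c * t * ⟪ν, u⟫ := by
  rw [norm_add_sq_real, norm_smul, norm_smul, hν, hu, real_inner_smul_left,
    real_inner_smul_right, Real.norm_eq_abs, Real.norm_eq_abs, mul_one, mul_one,
    sq_abs, sq_abs]
  ring


set_option maxHeartbeats 2000000 in
/-- Concavity estimate: if the boundary of the compact convex set `C` is locally a level
set of `(1+ε)`-Lipschitz, `(-1+ε)`-concave functions, then along a unit-speed segment
starting in the interior, the distance to `∂C` is bounded above, up to `o(t²)`, by the
distance to a comparison circle of radius `R = (1+ε)/(1-ε)` in the Euclidean plane. -/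
theorem concavity_estimate (n : ℕ) (hn : 1 ≤ n) (ε : ℝ) (hε : 0 < ε) (hε1 : ε < 1)
    (R : ℝ) (hR : R = (1 + ε) / (1 - ε))
    (C : Set (EuclideanSpace ℝ (Fin n)))
    (hcomp : IsCompact C) (hconv : Convex ℝ C) (hint : (interior C).Nonempty)
    (hdist : ∀ x ∈ C, Metric.infDist x (frontier C) < R)
    (hbd : ∀ b ∈ frontier C, ∃ r > (0 : ℝ), ∃ Fb : EuclideanSpace ℝ (Fin n) → ℝ,
      (∀ x ∈ Metric.ball b r ∩ C, ∀ y ∈ Metric.ball b r ∩ C,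
        |Fb x - Fb y| ≤ (1 + ε) * dist x y) ∧
      LambdaConcaveOn (-1 + ε) Fb (Metric.ball b r ∩ C) ∧
      (∀ q ∈ Metric.ball b r ∩ frontier C, Fb q = -(1 / 2)) ∧
      (∀ q ∈ Metric.ball b r ∩ interior C, Fb q > -(1 / 2)))
    (u : EuclideanSpace ℝ (Fin n)) (hu : ‖u‖ = 1)
    (γ₀ : EuclideanSpace ℝ (Fin n)) (hγ₀ : γ₀ ∈ interior C)
    (p : EuclideanSpace ℝ (Fin n)) (hp : p ∈ frontier C)
    (hnear : dist γ₀ p = Metric.infDist γ₀ (frontier C))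
    (d₀ : ℝ) (hd₀ : d₀ = Metric.infDist γ₀ (frontier C))
    (α : ℝ) (hα : α = InnerProductGeometry.angle u (p - γ₀)) :
    Filter.limsup
      (fun t : ℝ =>
        (Metric.infDist (γ₀ + t • u) (frontier C)
          - (R - Real.sqrt ((R - d₀) ^ 2 + t ^ 2 + 2 * (R - d₀) * t * Real.cos α))) / t ^ 2)
      (nhdsWithin 0 (Set.Ioi 0)) ≤ 0 := by
  have hCcl : IsClosed C := hcomp.isClosed
  have hγ₀C : γ₀ ∈ C := interior_subset hγ₀
  have hfr_sub : frontier C ⊆ C := hCcl.frontier_subset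
  have hfr_cpt : IsCompact (frontier C) := hcomp.of_isClosed_subset isClosed_frontier hfr_sub
  have hfr_ne : (frontier C).Nonempty := ⟨p, hp⟩
  have hd₀pos : 0 < d₀ := by
    rw [hd₀]
    refine (IsClosed.notMem_iff_infDist_pos isClosed_frontier hfr_ne).mp ?_
    intro hmem
    rw [hCcl.frontier_eq] at hmem
    exact hmem.2 hγ₀
  have hd₀R : d₀ < R := by rw [hd₀]; exact hdist γ₀ hγ₀C
  have hRpos : 0 < R := lt_trans hd₀pos hd₀R
  have hpγ : dist γ₀ p = d₀ := by rw [hnear, ← hd₀]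
  have hpγn : ‖p - γ₀‖ = d₀ := by rw [← dist_eq_norm, dist_comm]; exact hpγ
  set ν : EuclideanSpace ℝ (Fin n) := d₀⁻¹ • (p - γ₀) with hν
  have hνn : ‖ν‖ = 1 := by
    rw [hν, norm_smul, norm_inv, Real.norm_of_nonneg hd₀pos.le, hpγn,
      inv_mul_cancel₀ hd₀pos.ne']
  have hdν : d₀ • ν = p - γ₀ := by
    rw [hν, smul_smul, mul_inv_cancel₀ hd₀pos.ne', one_smul]
  have hhalf : ∀ x ∈ C, ⟪x - p, ν⟫ ≤ 0 :=
    halfspace C hconv hCcl γ₀ hγ₀ p hp d₀ hd₀pos hd₀ hpγ ν hν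
  obtain ⟨r, hr, F, hFlip, hFconc, hFfr, -⟩ := hbd p hp
  have hkey : ∀ q ∈ frontier C, dist q p < r / 3 → ‖q - (p - R • ν)‖ ≤ R :=
    fun q hq hqr => chord_key C hconv hCcl hfr_cpt ε hε hε1 R hR p hp ν hνn hhalf
      r hr F hFlip hFconc hFfr q hq hqr
  set ρ : ℝ := min (r / 3) R with hρ
  have hρpos : 0 < ρ := lt_min (by linarith) hRpos
  have hloc : ∀ x ∈ C, dist x p < ρ / 4 → ‖x - (p - R • ν)‖ ≤ R := by
    intro x hx hxp
    exact local_containment C hCcl p hp ν hνn hhalf R hRpos ρ hρpos (min_le_right _ _)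
      (fun q hq h => hkey q hq (lt_of_lt_of_le h (min_le_left _ _))) x hx hxp
  set M : EuclideanSpace ℝ (Fin n) := p - R • ν with hM
  have hγ₀M : γ₀ - M = (R - d₀) • ν := by
    rw [hM, sub_smul, hdν]; abel
  set a : ℝ → ℝ := fun t => ‖γ₀ + t • u - M‖ with ha
  have hcos : Real.cos α = ⟪ν, u⟫ := by
    rw [hα, InnerProductGeometry.cos_angle, hu, hpγn, one_mul, hν,
      real_inner_smul_left, real_inner_comm]
    field_simp
  have hasq : ∀ t : ℝ, a t ^ 2 = (R - d₀) ^ 2 + t ^ 2 + 2 * (R - d₀) * t * Real.cos α := by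
    intro t
    have h1 : γ₀ + t • u - M = (R - d₀) • ν + t • u := by rw [← hγ₀M]; abel
    have h2 := norm_expand_aux ν u hνn hu (R - d₀) t
    rw [ha]
    simp only
    rw [h1, h2, hcos]
  have hsqrt : ∀ t : ℝ, Real.sqrt ((R - d₀) ^ 2 + t ^ 2 + 2 * (R - d₀) * t * Real.cos α) = a t := by
    intro t
    rw [← hasq t, Real.sqrt_sq (norm_nonneg _)]
  have hta : Filter.Tendsto a (nhds 0) (nhds (R - d₀)) := by
    have hcont : Continuous a := by
      rw [ha]; fun_prop
    have h0 : a 0 = R - d₀ := by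
      rw [ha]
      simp only [zero_smul, add_zero]
      rw [hγ₀M, norm_smul, hνn, mul_one, Real.norm_of_nonneg (by linarith)]
    have := hcont.tendsto 0
    rwa [h0] at this
  -- main eventual bound
  have main : ∀ η : ℝ, 0 < η → ∀ᶠ t in nhdsWithin 0 (Set.Ioi 0),
      (Metric.infDist (γ₀ + t • u) (frontier C)
        - (R - Real.sqrt ((R - d₀) ^ 2 + t ^ 2 + 2 * (R - d₀) * t * Real.cos α))) / t ^ 2 ≤ η := by
    intro η hη
    have htγ : Filter.Tendsto (fun t : ℝ => γ₀ + t • u) (nhds 0) (nhds γ₀) := by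
      have hcont : Continuous (fun t : ℝ => γ₀ + t • u) := by fun_prop
      have := hcont.tendsto 0
      simpa using this
    have hEint : ∀ᶠ t : ℝ in nhds 0, γ₀ + t • u ∈ interior C :=
      htγ.eventually (isOpen_interior.eventually_mem hγ₀)
    have hE1 : ∀ᶠ t : ℝ in nhds 0, 0 < a t :=
      hta.eventually (eventually_gt_nhds (by linarith))
    have hE2 : ∀ᶠ t : ℝ in nhds 0, a t < R :=
      hta.eventually (eventually_lt_nhds (by linarith))
    set w : ℝ → EuclideanSpace ℝ (Fin n) :=
      fun t => γ₀ + t • u + ((R - a t + η * t ^ 2) / a t) • (γ₀ + t • u - M) with hw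
    have htw : Filter.Tendsto w (nhds 0) (nhds p) := by
      have hc : Filter.Tendsto (fun t : ℝ => (R - a t + η * t ^ 2) / a t) (nhds 0)
          (nhds (d₀ / (R - d₀))) := by
        have hnum : Filter.Tendsto (fun t : ℝ => R - a t + η * t ^ 2) (nhds 0) (nhds d₀) := by
          have h1 : Filter.Tendsto (fun t : ℝ => η * t ^ 2) (nhds 0) (nhds 0) := by
            have : Continuous (fun t : ℝ => η * t ^ 2) := by fun_prop
            have h2 := this.tendsto 0
            simpa using h2
          have h3 := (tendsto_const_nhds (x := R)).sub hta
          have h4 := h3.add h1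
          simpa using h4.congr (fun t => rfl)
        exact hnum.div hta (by linarith)
      have hxM : Filter.Tendsto (fun t : ℝ => γ₀ + t • u - M) (nhds 0) (nhds (γ₀ - M)) := by
        have hcont : Continuous (fun t : ℝ => γ₀ + t • u - M) := by fun_prop
        have := hcont.tendsto 0
        simpa using this
      have := htγ.add (hc.smul hxM)
      have heval : γ₀ + (d₀ / (R - d₀)) • (γ₀ - M) = p := by
        rw [hγ₀M, smul_smul, div_mul_cancel₀ _ (by linarith : R - d₀ ≠ 0), hdν]
        abel
      rwa [heval] at this
    have hEw : ∀ᶠ t : ℝ in nhds 0, dist (w t) p < ρ / 4 :=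
      Metric.tendsto_nhds.mp htw (ρ / 4) (by linarith)
    filter_upwards [hEint.filter_mono nhdsWithin_le_nhds, hE1.filter_mono nhdsWithin_le_nhds,
      hE2.filter_mono nhdsWithin_le_nhds, hEw.filter_mono nhdsWithin_le_nhds,
      self_mem_nhdsWithin] with t hintC hat haR hwp ht
    have ht0 : 0 < t := ht
    set x : EuclideanSpace ℝ (Fin n) := γ₀ + t • u with hx
    set st : ℝ := R - a t + η * t ^ 2 with hst
    have hst0 : 0 ≤ st := by
      rw [hst]
      nlinarith [haR, sq_nonneg t, hη]
    have hax : a t = ‖x - M‖ := by rw [ha, hx]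
    have hwt : w t = x + (st / a t) • (x - M) := rfl
    have hwM : ‖w t - M‖ = a t + st := by
      have h1 : w t - M = (1 + st / a t) • (x - M) := by
        rw [hwt, add_smul, one_smul]; abel
      rw [h1, norm_smul, ← hax, Real.norm_of_nonneg (by positivity), add_mul, one_mul,
        div_mul_cancel₀ _ hat.ne']
    have hwnotC : w t ∉ C := by
      intro hc
      have h1 := hloc (w t) hc hwp
      rw [hwM] at h1
      have h2 : 0 < η * t ^ 2 := by positivity
      rw [hst] at h1
      linarith
    have hseg : (segment ℝ x (w t) ∩ frontier C).Nonempty := by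
      by_contra hcon
      rw [Set.not_nonempty_iff_eq_empty] at hcon
      have hdisj : ∀ z ∈ segment ℝ x (w t), z ∉ frontier C := by
        intro z hz hzf
        exact Set.eq_empty_iff_forall_notMem.mp hcon z ⟨hz, hzf⟩
      have hsub := avoid_frontier_subset_interior C (segment ℝ x (w t))
        (convex_segment x (w t)).isPreconnected hdisj x (left_mem_segment ℝ x (w t)) hintC
      exact hwnotC (interior_subset (hsub (right_mem_segment ℝ x (w t))))
    obtain ⟨z, hzseg, hzfr⟩ := hseg
    have hxw : ‖x - w t‖ = st := by
      have h1 : x - w t = -((st / a t) • (x - M)) := by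
        rw [hwt]; abel
      rw [h1, norm_neg, norm_smul, ← hax, Real.norm_of_nonneg (by positivity),
        div_mul_cancel₀ _ hat.ne']
    have hdxz : dist x z ≤ st := by
      have h1 := dist_add_dist_of_mem_segment hzseg
      have h2 : dist x (w t) = st := by rw [dist_eq_norm, hxw]
      have h3 : 0 ≤ dist z (w t) := dist_nonneg
      linarith
    have hinf : Metric.infDist x (frontier C) ≤ st :=
      le_trans (Metric.infDist_le_dist_of_mem hzfr) hdxz
    rw [hsqrt t, div_le_iff₀ (by positivity : (0:ℝ) < t ^ 2)]
    rw [hst] at hinf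
    linarith
  -- conclude the limsup
  rw [Filter.limsup_eq]
  set S : Set ℝ := {a | ∀ᶠ t in nhdsWithin 0 (Set.Ioi 0),
      (Metric.infDist (γ₀ + t • u) (frontier C)
        - (R - Real.sqrt ((R - d₀) ^ 2 + t ^ 2 + 2 * (R - d₀) * t * Real.cos α))) / t ^ 2 ≤ a}
    with hS
  by_cases hbb : BddBelow S
  · by_contra hcon
    push_neg at hcon
    have h1 : sInf S / 2 ∈ S := main (sInf S / 2) (by linarith)
    have h2 := csInf_le hbb h1
    linarith
  · rw [Real.sInf_of_not_bddBelow hbb]
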